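/- arXiv:2105.08025 — 2 statements merged into one kernel-verified Lean document; each statement's English description precedes it below -/
import Mathlib

section
/- For integers i with 1 ≤ i ≤ n and an n-simplex x, ∂(Δ_i(x)) + Δ_i(∂x) = Σ_{U ∈ P_{n-i}(n)} Σ_{ū ∈ {0,...,n}∖U} ( d_{ū.U^0}(x) ⊗ d_{U^1}(x) + d_{U^0}(x) ⊗ d_{ū.U^1}(x) ) over 𝔽₂. -/
open scoped TensorProduct

def posIn (S : Finset ℕ) (u : ℕ) : ℕ := (S.filter (fun v => v ≤ u)).card
def idxFun (U : Finset ℕ) (u : ℕ) : ℕ := (u + posIn U u) % 2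
def part0 (U : Finset ℕ) : Finset ℕ := U.filter (fun u => idxFun U u = 0)
def part1 (U : Finset ℕ) : Finset ℕ := U.filter (fun u => idxFun U u = 1)

variable {V : Type} [LinearOrder V]

/-- `dFace U x` deletes from the simplex `x` the vertices in (0-based) positions `U`. -/
def dFace (U : Finset ℕ) (x : Finset V) : Finset V :=
  ((((x.sort (· ≤ ·)).zipIdx).filter (fun p => decide (p.2 ∉ U))).map Prod.fst).toFinset

/-- Mod 2 simplicial chains: the free `𝔽₂`-module on simplices (finite subsets of `V`). -/
abbrev Chains (V : Type) [LinearOrder V] := Finset V →₀ ZMod 2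


noncomputable instance {V : Type} [LinearOrder V] :
    Zero (TensorProduct (ZMod 2) (Chains V) (Chains V)) :=
  (inferInstance : AddCommMonoid (TensorProduct (ZMod 2) (Chains V) (Chains V))).toAddMonoid.toZero

/-- Basis chain corresponding to a simplex. -/
noncomputable def eC (x : Finset V) : Chains V := Finsupp.single x 1

/-- The cup-`i` coproduct on a basis simplex. -/
noncomputable def deltaSimplex (i : ℤ) (x : Finset V) :
    TensorProduct (ZMod 2) (Chains V) (Chains V) :=
  if 0 ≤ i ∧ i ≤ (x.card : ℤ) - 1 then
    ∑ U ∈ Finset.powersetCard (x.card - 1 - i.toNat) (Finset.range x.card),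
      eC (dFace (part0 U) x) ⊗ₜ[ZMod 2] eC (dFace (part1 U) x)
  else (0 : TensorProduct (ZMod 2) (Chains V) (Chains V))

/-- The cup-`i` coproduct `Δᵢ`, as a linear map on chains. -/
noncomputable def deltaMap (V : Type) [LinearOrder V] (i : ℤ) :
    Chains V →ₗ[ZMod 2] TensorProduct (ZMod 2) (Chains V) (Chains V) :=
  Finsupp.lift _ (ZMod 2) (Finset V) (deltaSimplex i)

/-- Mod 2 boundary of a basis simplex. -/
noncomputable def bdSimplex (x : Finset V) : Chains V :=
  if 2 ≤ x.card then ∑ i ∈ Finset.range x.card, eC (dFace {i} x) else 0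

/-- Mod 2 simplicial boundary `∂ = Σ dᵢ`. -/
noncomputable def bdMap (V : Type) [LinearOrder V] : Chains V →ₗ[ZMod 2] Chains V :=
  Finsupp.lift _ (ZMod 2) (Finset V) bdSimplex

/-- Boundary on the tensor product: `∂(a⊗b) = ∂a⊗b + a⊗∂b` (signs trivial mod 2). -/
noncomputable def bdT (V : Type) [LinearOrder V] :
    TensorProduct (ZMod 2) (Chains V) (Chains V) →ₗ[ZMod 2]
      TensorProduct (ZMod 2) (Chains V) (Chains V) :=
  TensorProduct.map (bdMap V) LinearMap.id + TensorProduct.map LinearMap.id (bdMap V)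

/-- Transposition of tensor factors `T(a⊗b) = b⊗a`. -/
noncomputable def transp (V : Type) [LinearOrder V] :
    TensorProduct (ZMod 2) (Chains V) (Chains V) →ₗ[ZMod 2]
      TensorProduct (ZMod 2) (Chains V) (Chains V) :=
  (TensorProduct.comm (ZMod 2) (Chains V) (Chains V)).toLinearMap

/-- Chain map induced by a simplicial (monotone) map `f`. -/
noncomputable def fChain {W : Type} [LinearOrder W] (f : V → W) :
    Chains V →ₗ[ZMod 2] Chains W :=
  Finsupp.lift _ (ZMod 2) (Finset V)
    (fun x => if (x.image f).card = x.card then eC (x.image f) else 0)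

/-- Evaluation of a cochain on chains. -/
noncomputable def evalCochain (α : Finset V → ZMod 2) : Chains V →ₗ[ZMod 2] ZMod 2 :=
  Finsupp.lift _ (ZMod 2) (Finset V) α

/-- Evaluation of a tensor of cochains on a tensor of chains. -/
noncomputable def pairing (α β : Finset V → ZMod 2) :
    TensorProduct (ZMod 2) (Chains V) (Chains V) →ₗ[ZMod 2] ZMod 2 :=
  (LinearMap.mul' (ZMod 2) (ZMod 2)) ∘ₗ TensorProduct.map (evalCochain α) (evalCochain β)

/-- Indicator cochain of a single simplex. -/
def indC (a : Finset V) : Finset V → ZMod 2 := fun y => if y = a then 1 else 0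

namespace S13
open Finset
variable {V : Type} [LinearOrder V]

def rk (x : Finset V) (v : V) : ℕ := (x.filter (· < v)).card

lemma rk_emb (x : Finset V) {N : ℕ} (h : x.card = N) (i : Fin N) :
    rk x (x.orderEmbOfFin h i) = i := by
  have himg : x.filter (· < x.orderEmbOfFin h i) = (Finset.Iio i).image (x.orderEmbOfFin h) := by
    ext w
    simp only [mem_filter, mem_image, mem_Iio]
    constructor
    · rintro ⟨hw, hlt⟩
      have : w ∈ Set.range (x.orderEmbOfFin h) := by
        rw [x.range_orderEmbOfFin h]; exact_mod_cast hw
      obtain ⟨j, rfl⟩ := this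
      exact ⟨j, (OrderEmbedding.lt_iff_lt _).mp hlt, rfl⟩
    · rintro ⟨j, hj, rfl⟩
      refine ⟨x.orderEmbOfFin_mem h j, (OrderEmbedding.lt_iff_lt _).mpr hj⟩
  rw [rk, himg, Finset.card_image_of_injective _ (x.orderEmbOfFin h).injective, Fin.card_Iio]

lemma exists_emb {x : Finset V} {v : V} (hv : v ∈ x) :
    ∃ i : Fin x.card, x.orderEmbOfFin rfl i = v := by
  have : v ∈ Set.range (x.orderEmbOfFin rfl) := by
    rw [x.range_orderEmbOfFin rfl]; exact_mod_cast hv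
  obtain ⟨i, hi⟩ := this
  exact ⟨i, hi⟩

lemma rk_lt {x : Finset V} {v : V} (hv : v ∈ x) : rk x v < x.card := by
  obtain ⟨i, rfl⟩ := exists_emb hv
  rw [rk_emb]; exact i.2

lemma emb_rk {x : Finset V} {v : V} (hv : v ∈ x) :
    x.orderEmbOfFin rfl ⟨rk x v, rk_lt hv⟩ = v := by
  obtain ⟨i, rfl⟩ := exists_emb hv
  congr 1
  exact Fin.ext (rk_emb x rfl i)

lemma mem_dFace {U : Finset ℕ} {x : Finset V} {v : V} :
    v ∈ dFace U x ↔ v ∈ x ∧ rk x v ∉ U := by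
  simp only [dFace, List.mem_toFinset, List.mem_map, List.mem_filter,
    List.mem_zipIdx_iff_getElem?, decide_eq_true_eq]
  constructor
  · rintro ⟨⟨a, i⟩, ⟨hget, hU⟩, rfl⟩
    simp only at hget hU ⊢
    rw [List.getElem?_eq_some_iff] at hget
    obtain ⟨hi, ha⟩ := hget
    rw [Finset.length_sort] at hi
    have ha' : a = x.orderEmbOfFin rfl ⟨i, hi⟩ := by
      rw [Finset.orderEmbOfFin_apply]; exact ha.symm
    subst ha'
    refine ⟨x.orderEmbOfFin_mem rfl _, ?_⟩
    rw [rk_emb]; exact hU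
  · rintro ⟨hv, hU⟩
    refine ⟨(v, rk x v), ⟨?_, hU⟩, rfl⟩
    rw [List.getElem?_eq_some_iff]
    refine ⟨by rw [Finset.length_sort]; exact rk_lt hv, ?_⟩
    have := emb_rk hv
    rw [Finset.orderEmbOfFin_apply] at this
    exact this

lemma dFace_filter (U : Finset ℕ) (x : Finset V) :
    dFace U x = x.filter (fun v => rk x v ∉ U) := by
  ext v; rw [mem_dFace, mem_filter]

lemma rk_injOn {x : Finset V} {v w : V} (hv : v ∈ x) (hw : w ∈ x)
    (h : rk x v = rk x w) : v = w := by
  obtain ⟨i, rfl⟩ := exists_emb hv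
  obtain ⟨j, rfl⟩ := exists_emb hw
  rw [rk_emb, rk_emb] at h
  exact congrArg _ (Fin.ext h)

lemma rk_lt_rk {x : Finset V} {v w : V} (hv : v ∈ x) (hw : w ∈ x) :
    v < w ↔ rk x v < rk x w := by
  obtain ⟨i, rfl⟩ := exists_emb hv
  obtain ⟨j, rfl⟩ := exists_emb hw
  rw [rk_emb, rk_emb, ← Fin.lt_iff_val_lt_val]
  exact OrderEmbedding.lt_iff_lt _

lemma image_rk_filter (x : Finset V) (p : ℕ → Prop) [DecidablePred p] :
    (x.filter (fun v => p (rk x v))).image (rk x) = (range x.card).filter p := by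
  ext k
  simp only [mem_image, mem_filter, mem_range]
  constructor
  · rintro ⟨v, ⟨hv, hp⟩, rfl⟩
    exact ⟨rk_lt hv, hp⟩
  · rintro ⟨hk, hp⟩
    refine ⟨x.orderEmbOfFin rfl ⟨k, hk⟩, ⟨x.orderEmbOfFin_mem rfl _, ?_⟩, ?_⟩ <;>
      rw [rk_emb]
    exact hp

lemma card_filter_rk (x : Finset V) (p : ℕ → Prop) [DecidablePred p] :
    (x.filter (fun v => p (rk x v))).card = ((range x.card).filter p).card := by
  rw [← image_rk_filter]
  exact (Finset.card_image_of_injOn (fun v hv w hw h =>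
    rk_injOn (mem_filter.mp hv).1 (mem_filter.mp hw).1 h)).symm

lemma card_dFace (U : Finset ℕ) (x : Finset V) (hU : U ⊆ range x.card) :
    (dFace U x).card = x.card - U.card := by
  rw [dFace_filter]
  exact (card_filter_rk x (fun k => k ∉ U)).trans
    (by rw [← Finset.sdiff_eq_filter, card_sdiff_of_subset hU, card_range])

def cnt (S : Finset ℕ) (k : ℕ) : ℕ := ((range k).filter (· ∉ S)).card

lemma rk_dFace (S : Finset ℕ) (x : Finset V) {v : V} (hv : v ∈ x) :
    rk (dFace S x) v = cnt S (rk x v) := by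
  rw [rk, dFace_filter, filter_filter]
  have : (x.filter fun a => rk x a ∉ S ∧ a < v) =
      x.filter (fun a => rk x a ∉ S ∧ rk x a < rk x v) := by
    apply filter_congr
    intro w hw
    exact and_congr Iff.rfl (rk_lt_rk hw hv)
  rw [this]
  rw [show (x.filter fun a => rk x a ∉ S ∧ rk x a < rk x v).card
      = ((range x.card).filter (fun k => k ∉ S ∧ k < rk x v)).card from
    card_filter_rk x (fun k => k ∉ S ∧ k < rk x v), cnt]
  congr 1
  ext k
  simp only [mem_filter, mem_range]
  constructor
  · rintro ⟨_, h1, h2⟩; exact ⟨h2, h1⟩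
  · rintro ⟨h2, h1⟩; exact ⟨lt_trans h2 (rk_lt hv), h1, h2⟩

lemma dFace_dFace (S T : Finset ℕ) (x : Finset V) :
    dFace T (dFace S x) = x.filter (fun v => rk x v ∉ S ∧ cnt S (rk x v) ∉ T) := by
  rw [dFace_filter T, dFace_filter S, filter_filter]
  apply filter_congr
  intro v hv
  refine and_congr Iff.rfl (by rw [show rk (filter (fun v => rk x v ∉ S) x) v
    = cnt S (rk x v) from (dFace_filter S x) ▸ rk_dFace S x hv])

lemma dFace_empty (x : Finset V) : dFace ∅ x = x := by
  rw [dFace_filter]; simp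

lemma cnt_lt_cnt {S : Finset ℕ} {a b : ℕ} (h : a < b) (ha : a ∉ S) :
    cnt S a < cnt S b := by
  apply Finset.card_lt_card
  rw [Finset.ssubset_iff_of_subset]
  · exact ⟨a, by simp [ha, h], by simp⟩
  · exact Finset.filter_subset_filter _ (by simp [Finset.range_subset]; omega)

lemma cnt_inj {S : Finset ℕ} {k u : ℕ} (hk : k ∉ S) (hu : u ∉ S) :
    cnt S k = cnt S u ↔ k = u := by
  constructor
  · intro h
    rcases lt_trichotomy k u with hlt | he | hgt
    · exact absurd h (Nat.ne_of_lt (cnt_lt_cnt hlt hk))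
    · exact he
    · exact absurd h.symm (Nat.ne_of_lt (cnt_lt_cnt hgt hu))
  · rintro rfl; rfl

def sg (j w : ℕ) : ℕ := if w < j then w else w + 1

def tu (j k : ℕ) : ℕ := if k < j then k else k - 1

lemma sg_ne (j w : ℕ) : sg j w ≠ j := by unfold sg; split_ifs <;> omega

lemma tu_sg (j w : ℕ) : tu j (sg j w) = w := by unfold sg tu; split_ifs <;> omega

lemma sg_tu {j k : ℕ} (h : k ≠ j) : sg j (tu j k) = k := by unfold sg tu; split_ifs <;> omega

lemma sg_injective (j : ℕ) : Function.Injective (sg j) := by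
  intro a b h
  have := tu_sg j a
  rw [h, tu_sg] at this
  omega

lemma mem_image_sg {j k : ℕ} (T : Finset ℕ) (h : k ≠ j) :
    k ∈ T.image (sg j) ↔ tu j k ∈ T := by
  rw [Finset.mem_image]
  constructor
  · rintro ⟨w, hw, rfl⟩; rw [tu_sg]; exact hw
  · intro hw; exact ⟨tu j k, hw, sg_tu h⟩

lemma cnt_singleton {j k : ℕ} (h : k ≠ j) : cnt {j} k = tu j k := by
  unfold cnt tu
  have : (Finset.range k).filter (· ∉ ({j} : Finset ℕ)) = (Finset.range k).erase j := by
    ext a; simp [Finset.mem_erase, and_comm]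
  rw [this]
  have hc : ((Finset.range k).erase j).card = if j < k then k - 1 else k := by
    rcases Nat.lt_or_ge j k with hjk | hjk
    · rw [Finset.card_erase_of_mem (by simpa using hjk), Finset.card_range, if_pos hjk]
    · rw [Finset.erase_eq_of_notMem (by simp; omega), Finset.card_range,
        if_neg (by omega)]
  rw [hc]
  split_ifs <;> omega

lemma cnt_empty (k : ℕ) : cnt ∅ k = k := by simp [cnt]

lemma dFace_cnt_dFace {S : Finset ℕ} {u : ℕ} (hu : u ∉ S) (x : Finset V) :
    dFace {cnt S u} (dFace S x) = dFace (insert u S) x := by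
  rw [dFace_dFace, dFace_filter]
  apply Finset.filter_congr
  intro v hv
  simp only [Finset.mem_insert, Finset.mem_singleton, not_or]
  constructor
  · rintro ⟨h1, h2⟩
    exact ⟨fun he => h2 (by rw [he]), h1⟩
  · rintro ⟨h1, h2⟩
    exact ⟨h2, fun he => h1 ((cnt_inj h2 hu).mp he)⟩

lemma dFace_dFace_single (T : Finset ℕ) (j : ℕ) (x : Finset V) :
    dFace T (dFace {j} x) = dFace (insert j (T.image (sg j))) x := by
  rw [dFace_dFace, dFace_filter]
  apply Finset.filter_congr
  intro v hv
  simp only [Finset.mem_insert, Finset.mem_singleton, not_or]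
  constructor
  · rintro ⟨h1, h2⟩
    refine ⟨h1, fun hmem => h2 ?_⟩
    rw [cnt_singleton h1]
    exact (mem_image_sg T h1).mp hmem
  · rintro ⟨h1, h2⟩
    refine ⟨h1, fun hmem => h2 ?_⟩
    rw [cnt_singleton h1] at hmem
    exact (mem_image_sg T h1).mpr hmem

lemma lift_eC {M : Type} [AddCommMonoid M] [Module (ZMod 2) M] (g : Finset V → M)
    (y : Finset V) : Finsupp.lift M (ZMod 2) (Finset V) g (eC y) = g y := by
  rw [eC]
  rw [Finsupp.lift_apply, Finsupp.sum_single_index (by rw [zero_smul]), one_smul]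

lemma bdMap_eC (y : Finset V) : bdMap V (eC y) = bdSimplex y := lift_eC _ _

lemma deltaMap_eC (i : ℤ) (y : Finset V) : deltaMap V i (eC y) = deltaSimplex i y := lift_eC _ _

lemma bd_dFace (S : Finset ℕ) (x : Finset V) (hS : S ⊆ Finset.range x.card)
    (h2 : S.card + 2 ≤ x.card) :
    bdMap V (eC (dFace S x)) = ∑ u ∈ Finset.range x.card \ S, eC (dFace (insert u S) x) := by
  rw [bdMap_eC, bdSimplex, if_pos (by rw [card_dFace S x hS]; omega)]
  rw [card_dFace S x hS]
  have hinj : Set.InjOn (cnt S) ↑(Finset.range x.card \ S) := by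
    intro a ha b hb h
    simp only [Finset.coe_sdiff, Set.mem_diff, Finset.mem_coe, Finset.mem_range] at ha hb
    exact (cnt_inj ha.2 hb.2).mp h
  have himg : (Finset.range x.card \ S).image (cnt S) = Finset.range (x.card - S.card) := by
    apply Finset.eq_of_subset_of_card_le
    · intro k hk
      simp only [Finset.mem_image, Finset.mem_sdiff, Finset.mem_range] at hk
      obtain ⟨u, ⟨hu1, hu2⟩, rfl⟩ := hk
      rw [Finset.mem_range]
      calc cnt S u < cnt S x.card := cnt_lt_cnt hu1 hu2
        _ = x.card - S.card := by
            rw [cnt, ← Finset.sdiff_eq_filter, Finset.card_sdiff_of_subset hS, Finset.card_range]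
    · rw [Finset.card_range, Finset.card_image_of_injOn hinj,
        Finset.card_sdiff_of_subset hS, Finset.card_range]
  rw [← himg, Finset.sum_image (fun a ha b hb h =>
    hinj (by exact_mod_cast ha) (by exact_mod_cast hb) h)]
  apply Finset.sum_congr rfl
  intro u hu
  rw [dFace_cnt_dFace (Finset.mem_sdiff.mp hu).2]

lemma sg_le_sg (j a w : ℕ) : sg j a ≤ sg j w ↔ a ≤ w := by
  unfold sg; split_ifs <;> omega

lemma not_mem_image_sg (j : ℕ) (W : Finset ℕ) : j ∉ W.image (sg j) := by
  rw [Finset.mem_image]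
  rintro ⟨w, _, h⟩
  exact sg_ne j w h

lemma posIn_sg (j : ℕ) (W : Finset ℕ) (w : ℕ) :
    posIn (insert j (W.image (sg j))) (sg j w) = posIn W w + (if j ≤ w then 1 else 0) := by
  unfold posIn
  rw [Finset.filter_insert]
  have himg : (W.image (sg j)).filter (fun v => v ≤ sg j w)
      = (W.filter (fun v => v ≤ w)).image (sg j) := by
    rw [Finset.filter_image]
    congr 1
    apply Finset.filter_congr
    intro a _
    exact sg_le_sg j a w
  have hjs : (j ≤ sg j w) ↔ (j ≤ w) := by unfold sg; split_ifs <;> omega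
  by_cases h : j ≤ w
  · rw [if_pos (hjs.mpr h), if_pos h, himg,
      Finset.card_insert_of_notMem (not_mem_image_sg j _),
      Finset.card_image_of_injective _ (sg_injective j)]
  · rw [if_neg (fun hc => h (hjs.mp hc)), if_neg h, himg,
      Finset.card_image_of_injective _ (sg_injective j), add_zero]

lemma idxFun_sg (j : ℕ) (W : Finset ℕ) (w : ℕ) :
    idxFun (insert j (W.image (sg j))) (sg j w) = idxFun W w := by
  unfold idxFun
  rw [posIn_sg]
  unfold sg
  split_ifs <;> omega

lemma filter_idx_insert_sg (j : ℕ) (W : Finset ℕ) (c : ℕ) :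
    (insert j (W.image (sg j))).filter
        (fun u => idxFun (insert j (W.image (sg j))) u = c) =
      if idxFun (insert j (W.image (sg j))) j = c
      then insert j ((W.filter (fun w => idxFun W w = c)).image (sg j))
      else (W.filter (fun w => idxFun W w = c)).image (sg j) := by
  rw [Finset.filter_insert]
  have himg : (W.image (sg j)).filter (fun u => idxFun (insert j (W.image (sg j))) u = c)
      = (W.filter (fun w => idxFun W w = c)).image (sg j) := by
    rw [Finset.filter_image]
    congr 1
    apply Finset.filter_congr
    intro a _
    rw [idxFun_sg]
  rw [himg]

lemma part0_insert_sg (j : ℕ) (W : Finset ℕ) :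
    part0 (insert j (W.image (sg j))) =
      if idxFun (insert j (W.image (sg j))) j = 0
      then insert j ((part0 W).image (sg j)) else (part0 W).image (sg j) :=
  filter_idx_insert_sg j W 0

lemma part1_insert_sg (j : ℕ) (W : Finset ℕ) :
    part1 (insert j (W.image (sg j))) =
      if idxFun (insert j (W.image (sg j))) j = 1
      then insert j ((part1 W).image (sg j)) else (part1 W).image (sg j) :=
  filter_idx_insert_sg j W 1

lemma part1_eq_filter_neg (U : Finset ℕ) :
    part1 U = U.filter (fun u => ¬ idxFun U u = 0) := by
  unfold part1
  apply Finset.filter_congr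
  intro u _
  have := Nat.mod_two_eq_zero_or_one (u + posIn U u)
  unfold idxFun
  constructor <;> (intro h; omega)

lemma part0_union_part1 (U : Finset ℕ) : part0 U ∪ part1 U = U := by
  rw [part1_eq_filter_neg]
  exact Finset.filter_union_filter_not_eq _ U

lemma disjoint_part01 (U : Finset ℕ) : Disjoint (part0 U) (part1 U) := by
  rw [part1_eq_filter_neg]
  exact Finset.disjoint_filter_filter_not U U _

lemma part0_subset (U : Finset ℕ) : part0 U ⊆ U := Finset.filter_subset _ _
lemma part1_subset (U : Finset ℕ) : part1 U ⊆ U := Finset.filter_subset _ _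

noncomputable def FF (x : Finset V) (U : Finset ℕ) (u : ℕ) :
    TensorProduct (ZMod 2) (Chains V) (Chains V) :=
  if idxFun U u = 1
  then eC (dFace (insert u (part0 U)) x) ⊗ₜ[ZMod 2] eC (dFace (part1 U) x)
  else eC (dFace (part0 U) x) ⊗ₜ[ZMod 2] eC (dFace (insert u (part1 U)) x)

lemma deltaSimplex_eq {m i : ℕ} (hi : i ≤ m) {y : Finset V} (hy : y.card = m + 1) :
    deltaSimplex (i : ℤ) y =
      ∑ U ∈ Finset.powersetCard (m - i) (Finset.range (m + 1)),
        eC (dFace (part0 U) y) ⊗ₜ[ZMod 2] eC (dFace (part1 U) y) := by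
  rw [deltaSimplex, if_pos ⟨Int.natCast_nonneg i, by rw [hy]; push_cast; omega⟩]
  rw [hy, Int.toNat_natCast]
  have h : m + 1 - 1 - i = m - i := by omega
  rw [h]

lemma deltaSimplex_zero {i : ℕ} {y : Finset V} (hy : y.card ≤ i) :
    deltaSimplex (i : ℤ) y = 0 := by
  rw [deltaSimplex, if_neg]
  rintro ⟨-, h⟩
  omega

lemma term_eq (j : ℕ) (W : Finset ℕ) (x : Finset V) :
    eC (dFace (part0 W) (dFace {j} x)) ⊗ₜ[ZMod 2] eC (dFace (part1 W) (dFace {j} x)) =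
      FF x (insert j (W.image (sg j))) j := by
  rw [dFace_dFace_single, dFace_dFace_single, FF]
  have h0 := part0_insert_sg j W
  have h1 := part1_insert_sg j W
  rcases Nat.mod_two_eq_zero_or_one (j + posIn (insert j (W.image (sg j))) j) with hc | hc
  · have hc0 : idxFun (insert j (W.image (sg j))) j = 0 := hc
    rw [if_neg (by rw [hc0]; decide), h0, h1, if_pos hc0, if_neg (by rw [hc0]; decide)]
  · have hc1 : idxFun (insert j (W.image (sg j))) j = 1 := hc
    rw [if_pos hc1, h0, h1, if_neg (by rw [hc1]; decide), if_pos hc1]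

lemma stepD (n i : ℕ) (hi1 : 1 ≤ i) (hi2 : i ≤ n) (x : Finset V) (hx : x.card = n + 1) :
    deltaMap V (i : ℤ) (bdMap V (eC x)) =
      ∑ U ∈ Finset.powersetCard (n - i) (Finset.range (n + 1)), ∑ u ∈ U, FF x U u := by
  rw [bdMap_eC, bdSimplex, if_pos (by omega), map_sum, hx]
  have hcard : ∀ j ∈ Finset.range (n + 1), (dFace {j} x).card = n := by
    intro j hj
    rw [card_dFace {j} x (by rw [hx]; simpa using hj), hx, Finset.card_singleton]
    omega
  rcases eq_or_lt_of_le hi2 with rfl | hlt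
  · have l0 : ∑ j ∈ Finset.range (i + 1), deltaMap V (i : ℤ) (eC (dFace {j} x)) = 0 := by
      refine (Finset.sum_eq_zero (M := TensorProduct (ZMod 2) (Chains V) (Chains V)) ?_).trans rfl
      intro j hj
      rw [deltaMap_eC, deltaSimplex_zero (by rw [hcard j hj])]
    have r0 : ∑ U ∈ Finset.powersetCard (i - i) (Finset.range (i + 1)), ∑ u ∈ U, FF x U u
        = 0 := by
      refine (Finset.sum_eq_zero (M := TensorProduct (ZMod 2) (Chains V) (Chains V)) ?_).trans rfl
      intro U hU
      have hU0 : U = ∅ := Finset.card_eq_zero.mp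
        (by have := (Finset.mem_powersetCard.mp hU).2; omega)
      rw [hU0, Finset.sum_empty]
    rw [l0, r0]
  · have key : ∀ j ∈ Finset.range (n + 1),
        deltaMap V (i : ℤ) (eC (dFace {j} x)) =
          ∑ W ∈ Finset.powersetCard (n - 1 - i) (Finset.range n),
            FF x (insert j (W.image (sg j))) j := by
      intro j hj
      rw [deltaMap_eC,
        deltaSimplex_eq (show i ≤ n - 1 by omega) (show (dFace {j} x).card = n - 1 + 1 by
          rw [hcard j hj]; omega)]
      rw [show n - 1 + 1 = n from by omega]
      exact Finset.sum_congr rfl fun W _ => term_eq j W x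
    rw [Finset.sum_congr rfl key, Finset.sum_sigma', Finset.sum_sigma']
    refine Finset.sum_bij'
      (fun p _ => (⟨insert p.1 (p.2.image (sg p.1)), p.1⟩ : (_ : Finset ℕ) × ℕ))
      (fun q _ => (⟨q.2, (q.1.erase q.2).image (tu q.2)⟩ : (_ : ℕ) × Finset ℕ))
      ?_ ?_ ?_ ?_ ?_
    · rintro ⟨j, W⟩ hp
      dsimp only
      rw [Finset.mem_sigma] at hp ⊢
      obtain ⟨hj, hW⟩ := hp
      rw [Finset.mem_range] at hj
      rw [Finset.mem_powersetCard] at hW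
      obtain ⟨hWs, hWc⟩ := hW
      refine ⟨Finset.mem_powersetCard.mpr ⟨?_, ?_⟩, Finset.mem_insert_self _ _⟩
      · apply Finset.insert_subset (Finset.mem_range.mpr hj)
        intro k hk
        rw [Finset.mem_image] at hk
        obtain ⟨w, hw, rfl⟩ := hk
        have := Finset.mem_range.mp (hWs hw)
        rw [Finset.mem_range]
        unfold sg
        split_ifs <;> omega
      · rw [Finset.card_insert_of_notMem (not_mem_image_sg _ _),
          Finset.card_image_of_injective _ (sg_injective _), hWc]
        omega
    · rintro ⟨U, u⟩ hq
      dsimp only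
      rw [Finset.mem_sigma] at hq ⊢
      obtain ⟨hU, hu⟩ := hq
      rw [Finset.mem_powersetCard] at hU
      obtain ⟨hUs, hUc⟩ := hU
      have hun : u < n + 1 := Finset.mem_range.mp (hUs hu)
      constructor
      · exact Finset.mem_range.mpr hun
      · rw [Finset.mem_powersetCard]
        constructor
        · intro k hk
          rw [Finset.mem_image] at hk
          obtain ⟨a, ha, rfl⟩ := hk
          have ha' := Finset.mem_erase.mp ha
          have := Finset.mem_range.mp (hUs ha'.2)
          rw [Finset.mem_range]
          unfold tu
          have hne := ha'.1
          split_ifs <;> omega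
        · rw [Finset.card_image_of_injOn (fun a ha b hb h => by
            have ha' := (Finset.mem_erase.mp ha).1
            have hb' := (Finset.mem_erase.mp hb).1
            unfold tu at h
            split_ifs at h <;> omega),
            Finset.card_erase_of_mem hu, hUc]
          omega
    · rintro ⟨j, W⟩ hp
      dsimp only
      refine Sigma.ext rfl (heq_of_eq ?_)
      rw [Finset.erase_insert (not_mem_image_sg _ _), Finset.image_image]
      rw [show ((tu j) ∘ (sg j)) = id from funext fun w => tu_sg j w, Finset.image_id]
    · rintro ⟨U, u⟩ hq
      dsimp only
      rw [Finset.mem_sigma] at hq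
      refine Sigma.ext ?_ (heq_of_eq rfl)
      show insert u (((U.erase u).image (tu u)).image (sg u)) = U
      have hEq : Set.EqOn (sg u ∘ tu u) id ↑(U.erase u) :=
        fun k hk => sg_tu (Finset.mem_erase.mp (by exact_mod_cast hk)).1
      rw [Finset.image_image, Finset.image_congr hEq, Finset.image_id]
      exact Finset.insert_erase hq.2
    · rintro ⟨j, W⟩ _
      rfl

lemma add_self {M : Type} [AddCommMonoid M] [Module (ZMod 2) M] (m : M) : m + m = 0 := by
  have h : m + m = (1 + 1 : ZMod 2) • m := by rw [add_smul, one_smul]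
  rw [h, show (1 + 1 : ZMod 2) = 0 from rfl, zero_smul]

lemma sdiff_part0 {m : ℕ} {U : Finset ℕ} (hUs : U ⊆ Finset.range m) :
    Finset.range m \ part0 U = (Finset.range m \ U) ∪ part1 U := by
  ext k
  simp only [Finset.mem_sdiff, Finset.mem_union]
  by_cases hk : k ∈ U
  · have hkr : k ∈ Finset.range m := hUs hk
    simp only [hkr, true_and, part0, part1, Finset.mem_filter, hk, true_and]
    have h2 := Nat.mod_two_eq_zero_or_one (k + posIn U k)
    unfold idxFun
    constructor
    · intro h; right; omega
    · rintro (h | h)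
      · exact absurd trivial h
      · omega
  · have h0 : k ∉ part0 U := fun h => hk (part0_subset U h)
    have h1 : k ∉ part1 U := fun h => hk (part1_subset U h)
    simp only [h0, h1, hk, not_false_iff, and_true, or_false]

lemma sdiff_part1 {m : ℕ} {U : Finset ℕ} (hUs : U ⊆ Finset.range m) :
    Finset.range m \ part1 U = (Finset.range m \ U) ∪ part0 U := by
  ext k
  simp only [Finset.mem_sdiff, Finset.mem_union]
  by_cases hk : k ∈ U
  · have hkr : k ∈ Finset.range m := hUs hk
    simp only [hkr, true_and, part0, part1, Finset.mem_filter, hk, true_and]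
    have h2 := Nat.mod_two_eq_zero_or_one (k + posIn U k)
    unfold idxFun
    constructor
    · intro h; right; omega
    · rintro (h | h)
      · exact absurd trivial h
      · omega
  · have h0 : k ∉ part0 U := fun h => hk (part0_subset U h)
    have h1 : k ∉ part1 U := fun h => hk (part1_subset U h)
    simp only [h0, h1, hk, not_false_iff, and_true, or_false]

lemma perU (n i : ℕ) (hi1 : 1 ≤ i) (hi2 : i ≤ n) (x : Finset V) (hx : x.card = n + 1)
    (U : Finset ℕ) (hUs : U ⊆ Finset.range (n + 1)) (hUc : U.card = n - i) :
    bdT V (eC (dFace (part0 U) x) ⊗ₜ[ZMod 2] eC (dFace (part1 U) x))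
      + ∑ u ∈ U, FF x U u
    = ∑ u ∈ Finset.range (n + 1) \ U,
        (eC (dFace (insert u (part0 U)) x) ⊗ₜ[ZMod 2] eC (dFace (part1 U) x) +
         eC (dFace (part0 U) x) ⊗ₜ[ZMod 2] eC (dFace (insert u (part1 U)) x)) := by
  have hc0 : (part0 U).card ≤ n - i := hUc ▸ Finset.card_le_card (part0_subset U)
  have hc1 : (part1 U).card ≤ n - i := hUc ▸ Finset.card_le_card (part1_subset U)
  have h0s : part0 U ⊆ Finset.range x.card := by
    rw [hx]; exact (part0_subset U).trans hUs
  have h1s : part1 U ⊆ Finset.range x.card := by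
    rw [hx]; exact (part1_subset U).trans hUs
  set A1 := ∑ u ∈ Finset.range (n + 1) \ U,
      eC (dFace (insert u (part0 U)) x) ⊗ₜ[ZMod 2] eC (dFace (part1 U) x) with hA1
  set A2 := ∑ u ∈ Finset.range (n + 1) \ U,
      eC (dFace (part0 U) x) ⊗ₜ[ZMod 2] eC (dFace (insert u (part1 U)) x) with hA2
  set B1 := ∑ u ∈ part1 U,
      eC (dFace (insert u (part0 U)) x) ⊗ₜ[ZMod 2] eC (dFace (part1 U) x) with hB1
  set B2 := ∑ u ∈ part0 U,
      eC (dFace (part0 U) x) ⊗ₜ[ZMod 2] eC (dFace (insert u (part1 U)) x) with hB2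
  have hbd : bdT V (eC (dFace (part0 U) x) ⊗ₜ[ZMod 2] eC (dFace (part1 U) x))
      = (A1 + B1) + (A2 + B2) := by
    rw [bdT, LinearMap.add_apply, TensorProduct.map_tmul, TensorProduct.map_tmul,
      LinearMap.id_apply, LinearMap.id_apply,
      bd_dFace _ x h0s (by omega), bd_dFace _ x h1s (by omega), hx,
      TensorProduct.sum_tmul, TensorProduct.tmul_sum,
      sdiff_part0 hUs, sdiff_part1 hUs,
      Finset.sum_union (Finset.sdiff_disjoint.mono_right (part1_subset U)),
      Finset.sum_union (Finset.sdiff_disjoint.mono_right (part0_subset U))]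
  have hFF : ∑ u ∈ U, FF x U u = B2 + B1 := by
    have hsplit : ∑ u ∈ part0 U ∪ part1 U, FF x U u
        = (∑ u ∈ part0 U, FF x U u) + ∑ u ∈ part1 U, FF x U u :=
      Finset.sum_union (disjoint_part01 U)
    rw [part0_union_part1 U] at hsplit
    rw [hsplit]
    congr 1
    · apply Finset.sum_congr rfl
      intro u hu
      have h0 : idxFun U u = 0 := (Finset.mem_filter.mp hu).2
      rw [FF, if_neg (by rw [h0]; decide)]
    · apply Finset.sum_congr rfl
      intro u hu
      have h1 : idxFun U u = 1 := (Finset.mem_filter.mp hu).2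
      rw [FF, if_pos h1]
  rw [hbd, hFF, Finset.sum_add_distrib]
  calc (A1 + B1) + (A2 + B2) + (B2 + B1)
      = (A1 + A2) + ((B1 + B1) + (B2 + B2)) := by abel
    _ = A1 + A2 := by rw [add_self, add_self, add_zero, add_zero]

end S13

/-- for `1 ≤ i ≤ n` and an `n`-simplex `x`,
`∂(Δᵢ(x)) + Δᵢ(∂x) = Σ_{U ∈ P_{n-i}(n)} Σ_{ū ∉ U} ( d_{ū.U^0}(x) ⊗ d_{U^1}(x)
  + d_{U^0}(x) ⊗ d_{ū.U^1}(x) )` over `𝔽₂`. -/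
theorem stmt_13 {V : Type} [LinearOrder V] (n i : ℕ) (hi1 : 1 ≤ i) (hi2 : i ≤ n)
    (x : Finset V) (hx : x.card = n + 1) :
    bdT V (deltaMap V (i : ℤ) (eC x)) + deltaMap V (i : ℤ) (bdMap V (eC x)) =
      ∑ U ∈ Finset.powersetCard (n - i) (Finset.range (n + 1)),
        ∑ u ∈ Finset.range (n + 1) \ U,
          (eC (dFace (insert u (part0 U)) x) ⊗ₜ[ZMod 2] eC (dFace (part1 U) x) +
           eC (dFace (part0 U) x) ⊗ₜ[ZMod 2] eC (dFace (insert u (part1 U)) x)) := by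
  have hDelta : deltaMap V (i : ℤ) (eC x) =
      ∑ U ∈ Finset.powersetCard (n - i) (Finset.range (n + 1)),
        eC (dFace (part0 U) x) ⊗ₜ[ZMod 2] eC (dFace (part1 U) x) :=
    (S13.deltaMap_eC _ _).trans (S13.deltaSimplex_eq hi2 hx)
  rw [hDelta, map_sum, S13.stepD n i hi1 hi2 x hx, ← Finset.sum_add_distrib]
  exact Finset.sum_congr rfl fun U hU =>
    S13.perU n i hi1 hi2 x hx U (Finset.mem_powersetCard.mp hU).1
      (Finset.mem_powersetCard.mp hU).2
end

section
/- For 1 ≤ q ≤ n and an n-simplex x, Σ_{U ∈ P_q(n), ū ∉ U} ( d_{ū.U^0}(x) ⊗ d_{U^1}(x) + d_{U^0}(x) ⊗ d_{ū.U^1}(x) ) = (1+T) Σ_{W ∈ P_{q+1}(n)} d_{W^0}(x) ⊗ d_{W^1}(x) over 𝔽₂, where T swaps tensor factors. -/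
open scoped TensorProduct

variable {V : Type} [LinearOrder V]

namespace Stmt14Aux

lemma posIn_erase (W : Finset ℕ) (u v : ℕ) (hu : u ∈ W) :
    posIn (W.erase u) v = posIn W v - (if u ≤ v then 1 else 0) := by
  unfold posIn
  rw [Finset.filter_erase]
  by_cases h : u ≤ v
  · rw [Finset.card_erase_of_mem (by simp [Finset.mem_filter, hu, h])]
    simp [h]
  · rw [Finset.erase_eq_of_notMem (by simp [Finset.mem_filter, h])]
    simp [h]

lemma idxFun_lt_two (W : Finset ℕ) (v : ℕ) : idxFun W v < 2 := by
  unfold idxFun; omega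

lemma idxFun_erase_lt (W : Finset ℕ) (u v : ℕ) (hlt : v < u) :
    idxFun (W.erase u) v = idxFun W v := by
  unfold idxFun posIn
  rw [Finset.filter_erase, Finset.erase_eq_of_notMem (by simp; omega)]

lemma idxFun_erase_gt (W : Finset ℕ) (u v : ℕ) (hu : u ∈ W) (hgt : u < v) :
    idxFun (W.erase u) v = (idxFun W v + 1) % 2 := by
  have h1 : 1 ≤ posIn W v := by
    have : u ∈ W.filter (fun w => w ≤ v) := Finset.mem_filter.mpr ⟨hu, le_of_lt hgt⟩
    unfold posIn
    exact Finset.card_pos.mpr ⟨u, this⟩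
  have h2 : posIn (W.erase u) v = posIn W v - 1 := by
    rw [posIn_erase W u v hu, if_pos (le_of_lt hgt)]
  unfold idxFun
  rw [h2]
  omega

lemma mem_part0_erase (W : Finset ℕ) (u : ℕ) (hu : u ∈ W) (v : ℕ) :
    v ∈ part0 (W.erase u) ↔
      v ∈ W ∧ v ≠ u ∧ ((v < u ∧ idxFun W v = 0) ∨ (u < v ∧ idxFun W v = 1)) := by
  simp only [part0, Finset.mem_filter, Finset.mem_erase]
  constructor
  · rintro ⟨⟨hne, hvW⟩, hidx⟩
    refine ⟨hvW, hne, ?_⟩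
    rcases lt_or_gt_of_ne hne with h | h
    · rw [idxFun_erase_lt W u v h] at hidx; exact Or.inl ⟨h, hidx⟩
    · rw [idxFun_erase_gt W u v hu h] at hidx
      have := idxFun_lt_two W v
      right; exact ⟨h, by omega⟩
  · rintro ⟨hvW, hne, h | h⟩
    · exact ⟨⟨hne, hvW⟩, by rw [idxFun_erase_lt W u v h.1]; exact h.2⟩
    · refine ⟨⟨hne, hvW⟩, ?_⟩
      rw [idxFun_erase_gt W u v hu h.1, h.2]

lemma mem_part1_erase (W : Finset ℕ) (u : ℕ) (hu : u ∈ W) (v : ℕ) :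
    v ∈ part1 (W.erase u) ↔
      v ∈ W ∧ v ≠ u ∧ ((v < u ∧ idxFun W v = 1) ∨ (u < v ∧ idxFun W v = 0)) := by
  simp only [part1, Finset.mem_filter, Finset.mem_erase]
  constructor
  · rintro ⟨⟨hne, hvW⟩, hidx⟩
    refine ⟨hvW, hne, ?_⟩
    rcases lt_or_gt_of_ne hne with h | h
    · rw [idxFun_erase_lt W u v h] at hidx; exact Or.inl ⟨h, hidx⟩
    · rw [idxFun_erase_gt W u v hu h] at hidx
      have := idxFun_lt_two W v
      right; exact ⟨h, by omega⟩
  · rintro ⟨hvW, hne, h | h⟩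
    · exact ⟨⟨hne, hvW⟩, by rw [idxFun_erase_lt W u v h.1]; exact h.2⟩
    · refine ⟨⟨hne, hvW⟩, ?_⟩
      rw [idxFun_erase_gt W u v hu h.1, h.2]

def cut0 (W : Finset ℕ) (t : ℕ) : Finset ℕ :=
  W.filter (fun v => (v < t ∧ idxFun W v = 0) ∨ (t ≤ v ∧ idxFun W v = 1))

def cut1 (W : Finset ℕ) (t : ℕ) : Finset ℕ :=
  W.filter (fun v => (v < t ∧ idxFun W v = 1) ∨ (t ≤ v ∧ idxFun W v = 0))

lemma mem_cut0 (W : Finset ℕ) (t v : ℕ) :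
    v ∈ cut0 W t ↔ v ∈ W ∧ ((v < t ∧ idxFun W v = 0) ∨ (t ≤ v ∧ idxFun W v = 1)) := by
  simp [cut0, Finset.mem_filter]

lemma mem_cut1 (W : Finset ℕ) (t v : ℕ) :
    v ∈ cut1 W t ↔ v ∈ W ∧ ((v < t ∧ idxFun W v = 1) ∨ (t ≤ v ∧ idxFun W v = 0)) := by
  simp [cut1, Finset.mem_filter]

-- the eight set identities
lemma A0_0 (W : Finset ℕ) (u : ℕ) (hu : u ∈ W) (h : idxFun W u = 0) :
    insert u (part0 (W.erase u)) = cut0 W (u + 1) := by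
  ext v
  rcases eq_or_ne v u with rfl | hne
  · simp [mem_cut0, hu, h]
  · simp only [Finset.mem_insert, hne, false_or, mem_part0_erase W u hu, mem_cut0]
    constructor
    · rintro ⟨h1, h2, h3⟩; exact ⟨h1, by omega⟩
    · rintro ⟨h1, h3⟩; exact ⟨h1, hne, by omega⟩

lemma A1_0 (W : Finset ℕ) (u : ℕ) (hu : u ∈ W) (h : idxFun W u = 0) :
    part1 (W.erase u) = cut1 W (u + 1) := by
  ext v
  rcases eq_or_ne v u with rfl | hne
  · simp [mem_part1_erase W v hu, mem_cut1, h]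
  · simp only [mem_part1_erase W u hu, mem_cut1]
    constructor
    · rintro ⟨h1, h2, h3⟩; exact ⟨h1, by omega⟩
    · rintro ⟨h1, h3⟩; exact ⟨h1, hne, by omega⟩

lemma B0_0 (W : Finset ℕ) (u : ℕ) (hu : u ∈ W) (h : idxFun W u = 0) :
    part0 (W.erase u) = cut0 W u := by
  ext v
  rcases eq_or_ne v u with rfl | hne
  · simp [mem_part0_erase W v hu, mem_cut0, h]
  · simp only [mem_part0_erase W u hu, mem_cut0]
    constructor
    · rintro ⟨h1, h2, h3⟩; exact ⟨h1, by omega⟩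
    · rintro ⟨h1, h3⟩; exact ⟨h1, hne, by omega⟩

lemma B1_0 (W : Finset ℕ) (u : ℕ) (hu : u ∈ W) (h : idxFun W u = 0) :
    insert u (part1 (W.erase u)) = cut1 W u := by
  ext v
  rcases eq_or_ne v u with rfl | hne
  · simp [mem_cut1, hu, h]
  · simp only [Finset.mem_insert, hne, false_or, mem_part1_erase W u hu, mem_cut1]
    constructor
    · rintro ⟨h1, h2, h3⟩; exact ⟨h1, by omega⟩
    · rintro ⟨h1, h3⟩; exact ⟨h1, hne, by omega⟩

lemma A0_1 (W : Finset ℕ) (u : ℕ) (hu : u ∈ W) (h : idxFun W u = 1) :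
    insert u (part0 (W.erase u)) = cut0 W u := by
  ext v
  rcases eq_or_ne v u with rfl | hne
  · simp [mem_cut0, hu, h]
  · simp only [Finset.mem_insert, hne, false_or, mem_part0_erase W u hu, mem_cut0]
    constructor
    · rintro ⟨h1, h2, h3⟩; exact ⟨h1, by omega⟩
    · rintro ⟨h1, h3⟩; exact ⟨h1, hne, by omega⟩

lemma A1_1 (W : Finset ℕ) (u : ℕ) (hu : u ∈ W) (h : idxFun W u = 1) :
    part1 (W.erase u) = cut1 W u := by
  ext v
  rcases eq_or_ne v u with rfl | hne
  · simp [mem_part1_erase W v hu, mem_cut1, h]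
  · simp only [mem_part1_erase W u hu, mem_cut1]
    constructor
    · rintro ⟨h1, h2, h3⟩; exact ⟨h1, by omega⟩
    · rintro ⟨h1, h3⟩; exact ⟨h1, hne, by omega⟩

lemma B0_1 (W : Finset ℕ) (u : ℕ) (hu : u ∈ W) (h : idxFun W u = 1) :
    part0 (W.erase u) = cut0 W (u + 1) := by
  ext v
  rcases eq_or_ne v u with rfl | hne
  · simp [mem_part0_erase W v hu, mem_cut0, h]
  · simp only [mem_part0_erase W u hu, mem_cut0]
    constructor
    · rintro ⟨h1, h2, h3⟩; exact ⟨h1, by omega⟩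
    · rintro ⟨h1, h3⟩; exact ⟨h1, hne, by omega⟩

lemma B1_1 (W : Finset ℕ) (u : ℕ) (hu : u ∈ W) (h : idxFun W u = 1) :
    insert u (part1 (W.erase u)) = cut1 W (u + 1) := by
  ext v
  rcases eq_or_ne v u with rfl | hne
  · simp [mem_cut1, hu, h]
  · simp only [Finset.mem_insert, hne, false_or, mem_part1_erase W u hu, mem_cut1]
    constructor
    · rintro ⟨h1, h2, h3⟩; exact ⟨h1, by omega⟩
    · rintro ⟨h1, h3⟩; exact ⟨h1, hne, by omega⟩

-- endpoints
lemma cut0_min (W : Finset ℕ) (hW : W.Nonempty) : cut0 W (W.min' hW) = part1 W := by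
  ext v
  simp only [mem_cut0, part1, Finset.mem_filter]
  constructor
  · rintro ⟨h1, h2⟩; have := W.min'_le v h1; exact ⟨h1, by omega⟩
  · rintro ⟨h1, h2⟩; have := W.min'_le v h1; exact ⟨h1, by omega⟩

lemma cut1_min (W : Finset ℕ) (hW : W.Nonempty) : cut1 W (W.min' hW) = part0 W := by
  ext v
  simp only [mem_cut1, part0, Finset.mem_filter]
  constructor
  · rintro ⟨h1, h2⟩; have := W.min'_le v h1; exact ⟨h1, by omega⟩
  · rintro ⟨h1, h2⟩; have := W.min'_le v h1; exact ⟨h1, by omega⟩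

lemma cut0_max (W : Finset ℕ) (hW : W.Nonempty) : cut0 W (W.max' hW + 1) = part0 W := by
  ext v
  simp only [mem_cut0, part0, Finset.mem_filter]
  constructor
  · rintro ⟨h1, h2⟩; have := W.le_max' v h1; exact ⟨h1, by omega⟩
  · rintro ⟨h1, h2⟩; have := W.le_max' v h1; exact ⟨h1, by omega⟩

lemma cut1_max (W : Finset ℕ) (hW : W.Nonempty) : cut1 W (W.max' hW + 1) = part1 W := by
  ext v
  simp only [mem_cut1, part1, Finset.mem_filter]
  constructor
  · rintro ⟨h1, h2⟩; have := W.le_max' v h1; exact ⟨h1, by omega⟩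
  · rintro ⟨h1, h2⟩; have := W.le_max' v h1; exact ⟨h1, by omega⟩

lemma cut0_congr (W : Finset ℕ) (t t' : ℕ) (htt' : t ≤ t')
    (h : ∀ v ∈ W, ¬(t ≤ v ∧ v < t')) : cut0 W t = cut0 W t' := by
  apply Finset.filter_congr
  intro v hv
  have := h v hv
  constructor <;> rintro (⟨h1, h2⟩ | ⟨h1, h2⟩) <;> [skip; skip; skip; skip] <;>
    first
      | exact Or.inl ⟨by omega, h2⟩
      | exact Or.inr ⟨by omega, h2⟩

lemma cut1_congr (W : Finset ℕ) (t t' : ℕ) (htt' : t ≤ t')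
    (h : ∀ v ∈ W, ¬(t ≤ v ∧ v < t')) : cut1 W t = cut1 W t' := by
  apply Finset.filter_congr
  intro v hv
  have := h v hv
  constructor <;> rintro (⟨h1, h2⟩ | ⟨h1, h2⟩) <;>
    first
      | exact Or.inl ⟨by omega, h2⟩
      | exact Or.inr ⟨by omega, h2⟩



lemma telescope {M : Type*} [AddCommMonoid M] (hM : ∀ m : M, m + m = 0) (f : ℕ → M) :
    ∀ (W : Finset ℕ), ∀ (a b : ℕ), a ∈ W → b ∈ W → (∀ v ∈ W, a ≤ v ∧ v ≤ b) →
      (∀ a' ∈ W, ∀ b' ∈ W, a' < b' → (∀ c ∈ W, ¬(a' < c ∧ c < b')) → f (a' + 1) = f b') →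
      ∑ u ∈ W, (f u + f (u + 1)) = f a + f (b + 1) := by
  intro W
  induction W using Finset.strongInduction with
  | _ W ih =>
    intro a b haW hbW hbound hgap
    by_cases hempty : W.erase a = ∅
    · have hWa : W = {a} := by
        apply Finset.eq_singleton_iff_unique_mem.mpr
        refine ⟨haW, fun c hc => ?_⟩
        by_contra hne
        exact (Finset.notMem_empty c) (hempty ▸ Finset.mem_erase.mpr ⟨hne, hc⟩)
      have hba : b = a := by
        have := hWa ▸ hbW
        simpa using this
      subst hba
      rw [hWa, Finset.sum_singleton]
    · have hW' : (W.erase a).Nonempty := Finset.nonempty_iff_ne_empty.mpr hempty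
      set b' := (W.erase a).min' hW' with hb'
      have hb'W' : b' ∈ W.erase a := Finset.min'_mem _ hW'
      have hb'W : b' ∈ W := Finset.mem_of_mem_erase hb'W'
      have hab' : a < b' := by
        have h1 := (hbound b' hb'W).1
        have h2 := (Finset.mem_erase.mp hb'W').1
        omega
      have hbW' : b ∈ W.erase a := by
        refine Finset.mem_erase.mpr ⟨?_, hbW⟩
        have := (hbound b' hb'W).2
        omega
      have hsub : W.erase a ⊂ W := Finset.erase_ssubset haW
      have hsum' : ∑ u ∈ W.erase a, (f u + f (u + 1)) = f b' + f (b + 1) := by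
        refine ih _ hsub b' b hb'W' hbW' ?_ ?_
        · intro v hv
          exact ⟨Finset.min'_le _ v hv, (hbound v (Finset.mem_of_mem_erase hv)).2⟩
        · intro a1 ha1 b1 hb1 hlt hno
          refine hgap a1 (Finset.mem_of_mem_erase ha1) b1 (Finset.mem_of_mem_erase hb1) hlt ?_
          intro c hc hcc
          have hca : c ≠ a := by
            have := (hbound a1 (Finset.mem_of_mem_erase ha1)).1
            omega
          exact hno c (Finset.mem_erase.mpr ⟨hca, hc⟩) hcc
      have hfa : f (a + 1) = f b' := by
        refine hgap a haW b' hb'W hab' ?_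
        intro c hc hcc
        have hcW' : c ∈ W.erase a := Finset.mem_erase.mpr ⟨by omega, hc⟩
        have := Finset.min'_le _ c hcW'
        omega
      rw [← Finset.add_sum_erase _ _ haW, hsum', hfa, add_assoc, ← add_assoc (f b'),
        hM (f b'), zero_add]




lemma char2M {V : Type} [LinearOrder V]
    (m : TensorProduct (ZMod 2) (Chains V) (Chains V)) : m + m = 0 := by
  rw [← two_smul (ZMod 2) m, show (2 : ZMod 2) = 0 from by decide, zero_smul]

lemma sum_over_W {V : Type} [LinearOrder V] (x : Finset V) (W : Finset ℕ) (hW : W.Nonempty) :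
    ∑ u ∈ W,
        (eC (dFace (insert u (part0 (W.erase u))) x) ⊗ₜ[ZMod 2] eC (dFace (part1 (W.erase u)) x) +
          eC (dFace (part0 (W.erase u)) x) ⊗ₜ[ZMod 2] eC (dFace (insert u (part1 (W.erase u))) x)) =
      eC (dFace (part1 W) x) ⊗ₜ[ZMod 2] eC (dFace (part0 W) x) +
        eC (dFace (part0 W) x) ⊗ₜ[ZMod 2] eC (dFace (part1 W) x) := by
  set f : ℕ → TensorProduct (ZMod 2) (Chains V) (Chains V) :=
    fun t => eC (dFace (cut0 W t) x) ⊗ₜ[ZMod 2] eC (dFace (cut1 W t) x) with hf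
  have hterm : ∀ u ∈ W,
      (eC (dFace (insert u (part0 (W.erase u))) x) ⊗ₜ[ZMod 2] eC (dFace (part1 (W.erase u)) x) +
        eC (dFace (part0 (W.erase u)) x) ⊗ₜ[ZMod 2] eC (dFace (insert u (part1 (W.erase u))) x)) =
      f u + f (u + 1) := by
    intro u hu
    have h01 : idxFun W u = 0 ∨ idxFun W u = 1 := by
      have := idxFun_lt_two W u; omega
    rcases h01 with h | h
    · rw [A0_0 W u hu h, B1_0 W u hu h, A1_0 W u hu h, B0_0 W u hu h]
      simp only [hf]
      exact add_comm _ _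
    · rw [A0_1 W u hu h, B1_1 W u hu h, A1_1 W u hu h, B0_1 W u hu h]
  rw [Finset.sum_congr rfl hterm]
  have hgap : ∀ a ∈ W, ∀ b ∈ W, a < b → (∀ c ∈ W, ¬(a < c ∧ c < b)) → f (a + 1) = f b := by
    intro a _ b _ hab hno
    have h0 : cut0 W (a + 1) = cut0 W b :=
      cut0_congr W (a + 1) b hab (fun v hv hc => hno v hv ⟨by omega, by omega⟩)
    have h1 : cut1 W (a + 1) = cut1 W b :=
      cut1_congr W (a + 1) b hab (fun v hv hc => hno v hv ⟨by omega, by omega⟩)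
    simp only [hf, h0, h1]
  have htel := telescope char2M f W (W.min' hW) (W.max' hW) (W.min'_mem hW) (W.max'_mem hW)
    (fun v hv => ⟨W.min'_le v hv, W.le_max' v hv⟩) hgap
  rw [htel]
  simp only [hf]
  rw [cut0_min W hW, cut1_min W hW, cut0_max W hW, cut1_max W hW]

end Stmt14Aux


open Stmt14Aux in
/-- for `1 ≤ q ≤ n` and an `n`-simplex `x`,
`Σ_{U ∈ P_q(n), ū ∉ U} ( d_{ū.U^0}(x) ⊗ d_{U^1}(x) + d_{U^0}(x) ⊗ d_{ū.U^1}(x) )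
  = (1 + T) Σ_{W ∈ P_{q+1}(n)} d_{W^0}(x) ⊗ d_{W^1}(x)` over `𝔽₂`. -/
theorem stmt_14 {V : Type} [LinearOrder V] (n q : ℕ) (hq1 : 1 ≤ q) (hq2 : q ≤ n)
    (x : Finset V) (hx : x.card = n + 1) :
    ∑ U ∈ Finset.powersetCard q (Finset.range (n + 1)),
        ∑ u ∈ Finset.range (n + 1) \ U,
          (eC (dFace (insert u (part0 U)) x) ⊗ₜ[ZMod 2] eC (dFace (part1 U) x) +
           eC (dFace (part0 U) x) ⊗ₜ[ZMod 2] eC (dFace (insert u (part1 U)) x)) =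
      (∑ W ∈ Finset.powersetCard (q + 1) (Finset.range (n + 1)),
          eC (dFace (part0 W) x) ⊗ₜ[ZMod 2] eC (dFace (part1 W) x)) +
        transp V (∑ W ∈ Finset.powersetCard (q + 1) (Finset.range (n + 1)),
          eC (dFace (part0 W) x) ⊗ₜ[ZMod 2] eC (dFace (part1 W) x)) := by
  classical
  have hstep : (∑ U ∈ Finset.powersetCard q (Finset.range (n + 1)),
        ∑ u ∈ Finset.range (n + 1) \ U,
          (eC (dFace (insert u (part0 U)) x) ⊗ₜ[ZMod 2] eC (dFace (part1 U) x) +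
           eC (dFace (part0 U) x) ⊗ₜ[ZMod 2] eC (dFace (insert u (part1 U)) x))) =
      ∑ W ∈ Finset.powersetCard (q + 1) (Finset.range (n + 1)), ∑ u ∈ W,
          (eC (dFace (insert u (part0 (W.erase u))) x) ⊗ₜ[ZMod 2] eC (dFace (part1 (W.erase u)) x) +
           eC (dFace (part0 (W.erase u)) x) ⊗ₜ[ZMod 2] eC (dFace (insert u (part1 (W.erase u))) x)) := by
    rw [Finset.sum_sigma' (Finset.powersetCard q (Finset.range (n + 1)))
      (fun U => Finset.range (n + 1) \ U)
      (fun U u => eC (dFace (insert u (part0 U)) x) ⊗ₜ[ZMod 2] eC (dFace (part1 U) x) +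
        eC (dFace (part0 U) x) ⊗ₜ[ZMod 2] eC (dFace (insert u (part1 U)) x)),
      Finset.sum_sigma' (Finset.powersetCard (q + 1) (Finset.range (n + 1))) (fun W => W)
      (fun W u => eC (dFace (insert u (part0 (W.erase u))) x) ⊗ₜ[ZMod 2] eC (dFace (part1 (W.erase u)) x) +
        eC (dFace (part0 (W.erase u)) x) ⊗ₜ[ZMod 2] eC (dFace (insert u (part1 (W.erase u))) x))]
    refine Finset.sum_nbij' (fun p => ⟨insert p.2 p.1, p.2⟩) (fun p => ⟨p.1.erase p.2, p.2⟩)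
      ?_ ?_ ?_ ?_ ?_
    · rintro ⟨U, u⟩ hp
      rw [Finset.mem_sigma] at hp
      obtain ⟨hU, hu⟩ := hp
      rw [Finset.mem_powersetCard] at hU
      rw [Finset.mem_sdiff] at hu
      rw [Finset.mem_sigma, Finset.mem_powersetCard]
      exact ⟨⟨Finset.insert_subset hu.1 hU.1, by rw [Finset.card_insert_of_notMem hu.2, hU.2]⟩,
        Finset.mem_insert_self u U⟩
    · rintro ⟨W, u⟩ hp
      rw [Finset.mem_sigma] at hp
      obtain ⟨hWm, hu⟩ := hp
      rw [Finset.mem_powersetCard] at hWm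
      rw [Finset.mem_sigma, Finset.mem_powersetCard, Finset.mem_sdiff]
      refine ⟨⟨(Finset.erase_subset u W).trans hWm.1, ?_⟩, hWm.1 hu, Finset.notMem_erase u W⟩
      rw [Finset.card_erase_of_mem hu, hWm.2]
      omega
    · rintro ⟨U, u⟩ hp
      rw [Finset.mem_sigma, Finset.mem_sdiff] at hp
      simp only [Finset.erase_insert hp.2.2]
    · rintro ⟨W, u⟩ hp
      rw [Finset.mem_sigma] at hp
      simp only [Finset.insert_erase hp.2]
    · rintro ⟨U, u⟩ hp
      rw [Finset.mem_sigma, Finset.mem_sdiff] at hp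
      simp only [Finset.erase_insert hp.2.2]
  rw [hstep, map_sum, ← Finset.sum_add_distrib]
  refine Finset.sum_congr rfl ?_
  intro W hW
  rw [Finset.mem_powersetCard] at hW
  have hWne : W.Nonempty := by
    rw [← Finset.card_pos, hW.2]; omega
  rw [Stmt14Aux.sum_over_W x W hWne]
  rw [transp]
  simp only [LinearEquiv.coe_coe, TensorProduct.comm_tmul]
  exact add_comm _ _
end
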